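/- Removal of a walk singlet preserves cospectrality: let G be a real symmetric matrix on vertex set V with cospectral vertices u, v and let c ∈ V \ {u,v} be a walk singlet relative to (u,v), i.e., (G^k)_{uc} = p·(G^k)_{vc} for all k with p ∈ {+1,−1}. Then u and v are cospectral in the submatrix R = G \ c obtained by deleting the row and column indexed by c: (R^k)_{uu} = (R^k)_{vv} for all non-negative integers k. -/

import Mathlib

/-- Removal of a walk singlet preserves cospectrality: deleting the row and column
of a walk singlet `c` relative to the cospectral pair `(u,v)` keeps `u, v`
cospectral in the principal submatrix `R`. -/
theorem stmt12 {V : Type*} [Fintype V] [DecidableEq V]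
    (G : Matrix V V ℝ) (hsymm : G.IsSymm)
    (u v c : V) (hu : u ≠ c) (hv : v ≠ c) (p : ℝ) (hp : p = 1 ∨ p = -1)
    (hcosp : ∀ k : ℕ, (G ^ k) u u = (G ^ k) v v)
    (hsinglet : ∀ k : ℕ, (G ^ k) u c = p * (G ^ k) v c)
    (R : Matrix {i : V // i ≠ c} {i : V // i ≠ c} ℝ)
    (hR : R = G.submatrix (Subtype.val : {i : V // i ≠ c} → V) (Subtype.val : {i : V // i ≠ c} → V)) :
    ∀ k : ℕ, (R ^ k) ⟨u, hu⟩ ⟨u, hu⟩ = (R ^ k) ⟨v, hv⟩ ⟨v, hv⟩ := by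
  subst hR
  -- H is G with row and column c zeroed out
  set H : Matrix V V ℝ := Matrix.of (fun i j => if i = c ∨ j = c then 0 else G i j) with hH
  have hHrow : ∀ j, H c j = 0 := by intro j; simp [hH]
  have hHcol : ∀ i, H i c = 0 := by intro i; simp [hH]
  have hHne : ∀ i j, i ≠ c → j ≠ c → H i j = G i j := by
    intro i j hi hj; simp [hH, hi, hj]
  -- symmetry of powers of G
  have hGsym : ∀ (k : ℕ) (x y : V), (G ^ k) x y = (G ^ k) y x := by
    intro k x y
    have h : (G ^ k).transpose = G ^ k := by
      rw [Matrix.transpose_pow, hsymm]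
    conv_lhs => rw [← h]
    rw [Matrix.transpose_apply]
  -- powers of H have zero row at c (off the diagonal entry at c itself, which we avoid)
  have hHpow0 : ∀ (m : ℕ) (w : V), w ≠ c → (H ^ m) c w = 0 := by
    intro m
    induction m with
    | zero => intro w hw; simp [Matrix.one_apply, Ne.symm hw]
    | succ m ih =>
      intro w hw
      rw [pow_succ', Matrix.mul_apply]
      apply Finset.sum_eq_zero
      intro z _
      rw [hHrow z, zero_mul]
  -- telescoping identity
  have tele : ∀ (A B : Matrix V V ℝ) (k : ℕ),
      A ^ k - B ^ k = ∑ ℓ ∈ Finset.range k, A ^ ℓ * (A - B) * B ^ (k - 1 - ℓ) := by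
    intro A B k
    induction k with
    | zero => simp
    | succ k ih =>
      rw [Finset.sum_range_succ']
      have h1 : ∀ ℓ ∈ Finset.range k,
          A ^ (ℓ + 1) * (A - B) * B ^ (k + 1 - 1 - (ℓ + 1))
            = A * (A ^ ℓ * (A - B) * B ^ (k - 1 - ℓ)) := by
        intro ℓ hℓ
        have h2 : k + 1 - 1 - (ℓ + 1) = k - 1 - ℓ := by omega
        rw [h2, pow_succ', mul_assoc, mul_assoc, mul_assoc]
      rw [Finset.sum_congr rfl h1, ← Finset.mul_sum, ← ih]
      simp only [pow_zero, one_mul, Nat.sub_zero, Nat.add_sub_cancel]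
      rw [mul_sub, sub_mul, pow_succ', pow_succ']
      abel_nf
  -- key entrywise computation
  have hinner : ∀ (m : ℕ) (y w : V), w ≠ c →
      ((G - H) * H ^ m) y w = if y = c then (G * H ^ m) c w else 0 := by
    intro m y w hw
    by_cases hy : y = c
    · subst hy
      simp only [if_pos rfl, Matrix.mul_apply, Matrix.sub_apply]
      apply Finset.sum_congr rfl
      intro z _
      rw [hHrow z]; ring
    · simp only [if_neg hy, Matrix.mul_apply, Matrix.sub_apply]
      apply Finset.sum_eq_zero
      intro z _
      by_cases hz : z = c
      · subst hz; rw [hHpow0 m w hw]; ring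
      · rw [hHne y z hy hz]; ring
  have key : ∀ (ℓ m : ℕ) (x w : V), w ≠ c →
      (G ^ ℓ * (G - H) * H ^ m) x w = (G ^ ℓ) x c * (G * H ^ m) c w := by
    intro ℓ m x w hw
    rw [mul_assoc, Matrix.mul_apply]
    rw [Finset.sum_eq_single c]
    · rw [hinner m c w hw, if_pos rfl]
    · intro y _ hy
      rw [hinner m y w hw, if_neg hy, mul_zero]
    · intro h; exact absurd (Finset.mem_univ c) h
  -- identity I1
  have I1 : ∀ (k : ℕ) (w : V), w ≠ c →
      (G ^ k) w w - (H ^ k) w w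
        = ∑ ℓ ∈ Finset.range k, (G ^ ℓ) w c * (G * H ^ (k - 1 - ℓ)) c w := by
    intro k w hw
    have h := tele G H k
    have h2 : (G ^ k - H ^ k) w w
        = (∑ ℓ ∈ Finset.range k, G ^ ℓ * (G - H) * H ^ (k - 1 - ℓ)) w w := by rw [h]
    rw [Matrix.sub_apply, Matrix.sum_apply] at h2
    rw [h2]
    exact Finset.sum_congr rfl fun ℓ _ => key ℓ (k - 1 - ℓ) w w hw
  -- identity I2
  have I2 : ∀ (n : ℕ) (w : V), w ≠ c →
      (G ^ (n + 1)) c w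
        = ∑ ℓ ∈ Finset.range (n + 1), (G ^ ℓ) c c * (G * H ^ (n - ℓ)) c w := by
    intro n w hw
    have h := tele G H (n + 1)
    have h2 : (G ^ (n + 1) - H ^ (n + 1)) c w
        = (∑ ℓ ∈ Finset.range (n + 1), G ^ ℓ * (G - H) * H ^ (n + 1 - 1 - ℓ)) c w := by rw [h]
    rw [Matrix.sub_apply, Matrix.sum_apply, hHpow0 (n + 1) w hw, sub_zero] at h2
    rw [h2]
    refine Finset.sum_congr rfl fun ℓ _ => ?_
    have h3 : n + 1 - 1 - ℓ = n - ℓ := by omega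
    rw [h3]
    exact key ℓ (n - ℓ) c w hw
  have hsing' : ∀ k : ℕ, (G ^ k) c u = p * (G ^ k) c v := by
    intro k
    rw [hGsym k c u, hGsym k c v]
    exact hsinglet k
  -- β_u = p β_v by strong induction
  have hbeta : ∀ m : ℕ, (G * H ^ m) c u = p * (G * H ^ m) c v := by
    intro m
    induction m using Nat.strong_induction_on with
    | _ m ih =>
      have eu := I2 m u hu
      have ev := I2 m v hv
      rw [Finset.sum_range_succ'] at eu ev
      simp only [pow_zero, Matrix.one_apply_eq, Nat.sub_zero, one_mul] at eu ev
      have hsum : ∑ ℓ ∈ Finset.range m, (G ^ (ℓ + 1)) c c * (G * H ^ (m - (ℓ + 1))) c u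
          = p * ∑ ℓ ∈ Finset.range m, (G ^ (ℓ + 1)) c c * (G * H ^ (m - (ℓ + 1))) c v := by
        rw [Finset.mul_sum]
        refine Finset.sum_congr rfl fun ℓ hℓ => ?_
        have hlt : m - (ℓ + 1) < m := by
          have := Finset.mem_range.mp hℓ; omega
        rw [ih _ hlt]; ring
      have hs := hsing' (m + 1)
      linear_combination (-1 : ℝ) * eu + p * ev - hsum + hs
  have hp2 : p * p = 1 := by rcases hp with h | h <;> rw [h] <;> norm_num
  -- H^k has equal diagonal at u and v
  have hHdiag : ∀ k : ℕ, (H ^ k) u u = (H ^ k) v v := by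
    intro k
    have h1 := I1 k u hu
    have h2 := I1 k v hv
    have hs : ∑ ℓ ∈ Finset.range k, (G ^ ℓ) u c * (G * H ^ (k - 1 - ℓ)) c u
        = ∑ ℓ ∈ Finset.range k, (G ^ ℓ) v c * (G * H ^ (k - 1 - ℓ)) c v := by
      refine Finset.sum_congr rfl fun ℓ _ => ?_
      rw [hsinglet ℓ, hbeta (k - 1 - ℓ)]
      calc p * (G ^ ℓ) v c * (p * (G * H ^ (k - 1 - ℓ)) c v)
          = (p * p) * ((G ^ ℓ) v c * (G * H ^ (k - 1 - ℓ)) c v) := by ring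
        _ = (G ^ ℓ) v c * (G * H ^ (k - 1 - ℓ)) c v := by rw [hp2, one_mul]
    have hc := hcosp k
    linarith [h1, h2]
  -- R^k agrees with H^k for positive powers
  have hRH : ∀ (m : ℕ) (x y : V) (hx : x ≠ c) (hy : y ≠ c),
      ((G.submatrix (Subtype.val : {i : V // i ≠ c} → V)
          (Subtype.val : {i : V // i ≠ c} → V)) ^ (m + 1))
        (⟨x, hx⟩ : {i : V // i ≠ c}) (⟨y, hy⟩ : {i : V // i ≠ c}) = (H ^ (m + 1)) x y := by
    intro m
    induction m with
    | zero =>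
      intro x y hx hy
      rw [pow_one, pow_one, Matrix.submatrix_apply, hHne x y hx hy]
    | succ m ih =>
      intro x y hx hy
      rw [pow_succ (G.submatrix (Subtype.val : {i : V // i ≠ c} → V)
            (Subtype.val : {i : V // i ≠ c} → V)) (m + 1),
        pow_succ H (m + 1), Matrix.mul_apply, Matrix.mul_apply]
      have e1 : ∀ w : {i : V // i ≠ c},
          ((G.submatrix (Subtype.val : {i : V // i ≠ c} → V) Subtype.val) ^ (m + 1))
            (⟨x, hx⟩ : {i : V // i ≠ c}) w *
            (G.submatrix (Subtype.val : {i : V // i ≠ c} → V) Subtype.val) w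
              (⟨y, hy⟩ : {i : V // i ≠ c})
          = (H ^ (m + 1)) x w.1 * H w.1 y := by
        rintro ⟨w, hw⟩
        rw [ih x w hx hw, Matrix.submatrix_apply, hHne w y hw hy]
      rw [Finset.sum_congr rfl (fun w _ => e1 w)]
      have e2 : ∑ w : {i : V // i ≠ c}, (H ^ (m + 1)) x w.1 * H w.1 y
          = ∑ w ∈ Finset.univ.erase c, (H ^ (m + 1)) x w * H w y := by
        rw [Finset.sum_subtype (p := fun i => i ≠ c) (Finset.univ.erase c)
          (by intro z; simp) (fun w => (H ^ (m + 1)) x w * H w y)]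
      rw [e2, Finset.sum_erase]
      rw [hHrow y, mul_zero]
  intro k
  cases k with
  | zero => simp
  | succ m =>
    rw [hRH m u u hu hu, hRH m v v hv hv]
    exact hHdiag (m + 1)
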